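/- In the setting of the two-graph generalized Hölder estimate (integers m, k, k' ≥ 1, H0 ∈ (1/2,1), t, t' ∈ ℝ, x : ℝ → [0,∞] measurable, nonnegative integer edge weights β_{j,q}, β'_{j',q'}, γ_{j,j'} with every node of total degree exactly m, and A(u,v) = ∫_{(−∞,u]}∫_{(−∞,v]} x(u−a)x(v−b)|a−b|^{m(2H0−2)} db da), assume additionally that there is a constant C ≥ 1 such that A(u,v) ≤ C for all u, v ∈ ℝ and A(u,v) ≤ C |u−v|^{m(2H0−2)} whenever u ≠ v. Then, with b = ∑ β_{j,q}, b' = ∑ β'_{j',q'}, c = ∑ γ_{j,j'}: ∫_{(−∞,t]^k} ∫_{(−∞,t']^{k'}} ∏_{j} x(t−s_j) ∏_{j'} x(t'−s'_{j'}) ∏_{q<j} |s_j−s_q|^{β_{j,q}(2H0−2)} ∏_{q'<j'} |s'_{j'}−s'_{q'}|^{β'_{j',q'}(2H0−2)} ∏_{j,j'} |s_j−s'_{j'}|^{γ_{j,j'}(2H0−2)} ds' ds ≤ C^{(b+b'+c)/m} · min(1, |t−t'|^{c(2H0−2)}), where for t = t' the right-hand side is read as C^{(b+b'+c)/m}. 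-/

import Mathlib

open MeasureTheory Real Finset

/-- `A(u,v) = ∫_{(−∞,u]} ∫_{(−∞,v]} x(u−a) x(v−b) |a−b|^(m(2H0−2)) db da`, in `[0,∞]`. -/
noncomputable def pairIntegral (m : ℕ) (H0 : ℝ) (x : ℝ → ENNReal) (u v : ℝ) : ENNReal :=
  ∫⁻ a in Set.Iic u, ∫⁻ b in Set.Iic v,
    x (u - a) * x (v - b) * ENNReal.ofReal (|a - b| ^ ((m : ℝ) * (2*H0 - 2)))

open MeasureTheory Real Finset Function

variable {ι : Type*} [DecidableEq ι] {α : ι → Type*} [∀ i, MeasurableSpace (α i)]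

lemma measurable_rpow_const' {δ : Type*} [MeasurableSpace δ] {f : δ → ENNReal}
    (hf : Measurable f) (y : ℝ) : Measurable fun z => f z ^ y :=
  ENNReal.continuous_rpow_const.measurable.comp hf

/-- If `f` depends only on coordinates in `S` and `i ∉ S`, then any marginal of `f`
is insensitive to updating coordinate `i`. -/
lemma lmarginal_update_of_indep (μ : ∀ i, Measure (α i))
    {f : (∀ i, α i) → ENNReal} {S : Finset ι}
    (hdep : ∀ z w : ∀ i, α i, (∀ j ∈ S, z j = w j) → f z = f w)
    {i : ι} (hi : i ∉ S) (T : Finset ι) (x : ∀ i, α i) (y : α i) :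
    (∫⋯∫⁻_T, f ∂μ) (update x i y) = (∫⋯∫⁻_T, f ∂μ) x := by
  simp only [MeasureTheory.lmarginal]
  refine lintegral_congr fun z => hdep _ _ fun j hj => ?_
  simp only [updateFinset]
  by_cases hjT : j ∈ T
  · simp [hjT]
  · have : j ≠ i := fun h => hi (h ▸ hj)
    simp [hjT, update_of_ne this]

/-- Finner's generalized Hölder inequality for functions depending on subsets of
coordinates, in `lmarginal` form. -/
theorem finner_holder (μ : ∀ i, Measure (α i)) [∀ i, SigmaFinite (μ i)]
    {ε : Type*} (E : Finset ε) (S : ε → Finset ι) (θ : ε → ℝ)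
    (f : ε → (∀ i, α i) → ENNReal)
    (hf : ∀ e, Measurable (f e))
    (hdep : ∀ e, ∀ z w : ∀ i, α i, (∀ j ∈ S e, z j = w j) → f e z = f e w)
    (hθ : ∀ e, 0 ≤ θ e)
    (T : Finset ι) (hT : ∀ i ∈ T, ∑ e ∈ E, (if i ∈ S e then θ e else 0) = 1)
    (x : ∀ i, α i) :
    (∫⋯∫⁻_T, (fun z => ∏ e ∈ E, f e z ^ θ e) ∂μ) x
      ≤ ∏ e ∈ E, ((∫⋯∫⁻_(T ∩ S e), f e ∂μ) x) ^ θ e := by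
  classical
  induction T using Finset.induction generalizing x with
  | empty => simp
  | @insert i T hi ih =>
    have hF : Measurable fun z => ∏ e ∈ E, f e z ^ θ e :=
      Finset.measurable_prod _ fun e _ => measurable_rpow_const' (hf e) _
    rw [lmarginal_insert _ hF hi x]
    have hT' : ∀ j ∈ T, ∑ e ∈ E, (if j ∈ S e then θ e else 0) = 1 :=
      fun j hj => hT j (Finset.mem_insert_of_mem hj)
    calc ∫⁻ xᵢ, (∫⋯∫⁻_T, (fun z => ∏ e ∈ E, f e z ^ θ e) ∂μ) (update x i xᵢ) ∂μ i
        ≤ ∫⁻ xᵢ, ∏ e ∈ E, ((∫⋯∫⁻_(T ∩ S e), f e ∂μ) (update x i xᵢ)) ^ θ e ∂μ i :=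
          lintegral_mono fun xᵢ => ih hT' (update x i xᵢ)
      _ = ∫⁻ xᵢ, (∏ e ∈ E.filter (fun e => i ∈ S e),
              ((∫⋯∫⁻_(T ∩ S e), f e ∂μ) (update x i xᵢ)) ^ θ e)
            * (∏ e ∈ E.filter (fun e => ¬ i ∈ S e),
              ((∫⋯∫⁻_(T ∩ S e), f e ∂μ) x) ^ θ e) ∂μ i := by
          refine lintegral_congr fun xᵢ => ?_
          rw [← Finset.prod_filter_mul_prod_filter_not E (fun e => i ∈ S e)]
          congr 1
          refine Finset.prod_congr rfl fun e he => ?_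
          rw [lmarginal_update_of_indep μ (hdep e) (Finset.mem_filter.mp he).2 (T ∩ S e) x xᵢ]
      _ = (∫⁻ xᵢ, ∏ e ∈ E.filter (fun e => i ∈ S e),
              ((∫⋯∫⁻_(T ∩ S e), f e ∂μ) (update x i xᵢ)) ^ θ e ∂μ i)
            * (∏ e ∈ E.filter (fun e => ¬ i ∈ S e),
              ((∫⋯∫⁻_(T ∩ S e), f e ∂μ) x) ^ θ e) := by
          refine lintegral_mul_const _ ?_
          refine Finset.measurable_prod _ fun e _ => measurable_rpow_const' ?_ _
          exact ((hf e).lmarginal μ).comp (measurable_update x (a := i))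
      _ ≤ (∏ e ∈ E.filter (fun e => i ∈ S e),
              (∫⁻ xᵢ, (∫⋯∫⁻_(T ∩ S e), f e ∂μ) (update x i xᵢ) ∂μ i) ^ θ e)
            * (∏ e ∈ E.filter (fun e => ¬ i ∈ S e),
              ((∫⋯∫⁻_(T ∩ S e), f e ∂μ) x) ^ θ e) := by
          refine mul_le_mul_left ?_ _
          refine ENNReal.lintegral_prod_norm_pow_le _
            (fun e _ => (((hf e).lmarginal μ).comp (measurable_update x (a := i))).aemeasurable)
            ?_ (fun e _ => hθ e)
          rw [Finset.sum_filter]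
          exact hT i (Finset.mem_insert_self i T)
      _ = ∏ e ∈ E, ((∫⋯∫⁻_((insert i T) ∩ S e), f e ∂μ) x) ^ θ e := by
          rw [← Finset.prod_filter_mul_prod_filter_not E (fun e => i ∈ S e)]
          congr 1
          · refine Finset.prod_congr rfl fun e he => ?_
            have hiS : i ∈ S e := (Finset.mem_filter.mp he).2
            have hiT : i ∉ T ∩ S e := fun h => hi (Finset.mem_inter.mp h).1
            rw [← lmarginal_insert _ (hf e) hiT x, Finset.insert_inter_of_mem hiS]
          · refine Finset.prod_congr rfl fun e he => ?_
            rw [Finset.insert_inter_of_notMem (Finset.mem_filter.mp he).2]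

open MeasureTheory Real Finset Function

lemma prod_rpow_sum {ε : Type*} (a : ENNReal) (s : Finset ε) (c : ε → ℝ)
    (hc : ∀ e ∈ s, 0 ≤ c e) : ∏ e ∈ s, a ^ c e = a ^ (∑ e ∈ s, c e) := by
  classical
  induction s using Finset.induction with
  | empty => simp
  | @insert i s hi ih =>
    rw [Finset.prod_insert hi, Finset.sum_insert hi,
      ENNReal.rpow_add_of_nonneg _ _ (hc i (Finset.mem_insert_self i s))
        (Finset.sum_nonneg fun e he => hc e (Finset.mem_insert_of_mem he)),
      ih fun e he => hc e (Finset.mem_insert_of_mem he)]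

lemma restrict_univ_pi {ι : Type*} [Fintype ι] {α : ι → Type*} [∀ i, MeasurableSpace (α i)]
    (μ : ∀ i, Measure (α i)) [∀ i, SigmaFinite (μ i)] (s : ∀ i, Set (α i))
    (hs : ∀ i, MeasurableSet (s i)) :
    (Measure.pi μ).restrict (Set.pi Set.univ s) = Measure.pi (fun i => (μ i).restrict (s i)) := by
  refine (Measure.pi_eq fun A hA => ?_).symm
  rw [Measure.restrict_apply (MeasurableSet.univ_pi hA), ← Set.pi_inter_distrib, Measure.pi_pi]
  exact Finset.prod_congr rfl fun i _ => (Measure.restrict_apply (hA i)).symm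

lemma ofReal_abs_rpow_factor {Δ r : ℝ} (hr : r < 0) {mm : ℕ} (hmm : mm ≠ 0) (w : ℕ) :
    ENNReal.ofReal (|Δ| ^ ((w : ℝ) * r))
      = (ENNReal.ofReal (|Δ| ^ ((mm : ℝ) * r))) ^ ((w : ℝ) / mm) := by
  have hmm' : (mm : ℝ) ≠ 0 := Nat.cast_ne_zero.mpr hmm
  rcases eq_or_ne Δ 0 with h0 | h0
  · subst h0
    rw [abs_zero]
    rcases Nat.eq_zero_or_pos w with hw | hw
    · subst hw
      simp
    · have hw' : (0:ℝ) < (w:ℝ) := by exact_mod_cast hw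
      have hmmr : (mm:ℝ) * r ≠ 0 := by
        have : (0:ℝ) < (mm:ℝ) := by positivity
        exact mul_ne_zero this.ne' hr.ne
      have hwr : (w:ℝ) * r ≠ 0 := mul_ne_zero hw'.ne' hr.ne
      rw [Real.zero_rpow hwr, Real.zero_rpow hmmr, ENNReal.ofReal_zero,
        ENNReal.zero_rpow_of_pos (by positivity)]
  · have h1 : ((mm:ℝ)*r) * ((w:ℝ)/mm) = (w:ℝ)*r := by field_simp
    rw [← h1, Real.rpow_mul (abs_nonneg Δ),
      ENNReal.ofReal_rpow_of_nonneg (Real.rpow_nonneg (abs_nonneg Δ) _) (by positivity)]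
open Finset

lemma sum_pair_indicator {ι : Type*} [Fintype ι] [DecidableEq ι] (θ : ι × ι → ℝ) (i : ι) :
    ∑ e : ι × ι, (if i ∈ ({e.1, e.2} : Finset ι) then θ e else 0)
      = ∑ q, θ (i, q) + ∑ p, θ (p, i) - θ (i, i) := by
  rw [Fintype.sum_prod_type]
  have key : ∀ p q : ι, (if i ∈ ({p, q} : Finset ι) then θ (p, q) else 0)
      = (if i = p then θ (p, q) else 0) + (if i = q then θ (p, q) else 0)
        - (if i = p then (if i = q then θ (p, q) else 0) else 0) := by
    intro p q
    by_cases h1 : i = p <;> by_cases h2 : i = q <;>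
      simp [h1, h2, Finset.mem_insert, Finset.mem_singleton]
  simp_rw [key, Finset.sum_sub_distrib, Finset.sum_add_distrib, Finset.sum_ite_eq]
  simp [Finset.sum_ite_eq]

section Aux

variable {k k' : ℕ}

def tt2 (t t' : ℝ) : Fin k ⊕ Fin k' → ℝ := Sum.elim (fun _ => t) (fun _ => t')

def w2 (β : Fin k → Fin k → ℕ) (β' : Fin k' → Fin k' → ℕ) (γ : Fin k → Fin k' → ℕ) :
    (Fin k ⊕ Fin k') × (Fin k ⊕ Fin k') → ℕ
  | (.inl j, .inl q) => if q < j then β j q else 0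
  | (.inl j, .inr j') => γ j j'
  | (.inr _, .inl _) => 0
  | (.inr j', .inr q') => if q' < j' then β' j' q' else 0

lemma w2_diag (β : Fin k → Fin k → ℕ) (β' : Fin k' → Fin k' → ℕ) (γ : Fin k → Fin k' → ℕ)
    (p : Fin k ⊕ Fin k') : w2 β β' γ (p, p) = 0 := by
  rcases p with j | j' <;> simp [w2]

noncomputable def f2 (m : ℕ) (H0 t t' : ℝ) (x : ℝ → ENNReal)
    (e : (Fin k ⊕ Fin k') × (Fin k ⊕ Fin k')) (z : Fin k ⊕ Fin k' → ℝ) : ENNReal :=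
  x (tt2 t t' e.1 - z e.1) * x (tt2 t t' e.2 - z e.2) *
    ENNReal.ofReal (|z e.1 - z e.2| ^ ((m : ℝ) * (2*H0 - 2)))

lemma f2_meas {m : ℕ} {H0 t t' : ℝ} {x : ℝ → ENNReal} (hx : Measurable x)
    (e : (Fin k ⊕ Fin k') × (Fin k ⊕ Fin k')) : Measurable (f2 m H0 t t' x e) := by
  refine Measurable.mul (Measurable.mul ?_ ?_) ?_
  · exact hx.comp (measurable_const.sub (measurable_pi_apply e.1))
  · exact hx.comp (measurable_const.sub (measurable_pi_apply e.2))
  · exact ENNReal.measurable_ofReal.comp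
      ((((measurable_pi_apply e.1).sub (measurable_pi_apply e.2)).abs).pow measurable_const)

lemma f2_dep {m : ℕ} {H0 t t' : ℝ} {x : ℝ → ENNReal}
    (e : (Fin k ⊕ Fin k') × (Fin k ⊕ Fin k')) (z w : Fin k ⊕ Fin k' → ℝ)
    (h : ∀ j ∈ ({e.1, e.2} : Finset (Fin k ⊕ Fin k')), z j = w j) :
    f2 m H0 t t' x e z = f2 m H0 t t' x e w := by
  have h1 := h e.1 (Finset.mem_insert_self _ _)
  have h2 := h e.2 (Finset.mem_insert_of_mem (Finset.mem_singleton_self _))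
  simp only [f2, h1, h2]

end Aux

section Aux2

variable {m k k' : ℕ} {H0 t t' : ℝ} {x : ℝ → ENNReal}
variable {β : Fin k → Fin k → ℕ} {β' : Fin k' → Fin k' → ℕ} {γ : Fin k → Fin k' → ℕ}

open Finset in
lemma rowcol (hm : m ≠ 0)
    (hdeg : ∀ j : Fin k,
      (∑ q ∈ univ.filter (fun q => q < j), β j q)
        + (∑ p ∈ univ.filter (fun p => j < p), β p j)
        + (∑ j' : Fin k', γ j j') = m)
    (hdeg' : ∀ j' : Fin k',
      (∑ q' ∈ univ.filter (fun q' => q' < j'), β' j' q')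
        + (∑ p' ∈ univ.filter (fun p' => j' < p'), β' p' j')
        + (∑ j : Fin k, γ j j') = m)
    (p : Fin k ⊕ Fin k') :
    (∑ q, ((w2 β β' γ (p, q) : ℝ) / m)) + (∑ q, ((w2 β β' γ (q, p) : ℝ) / m)) = 1 := by
  have hm' : (m : ℝ) ≠ 0 := Nat.cast_ne_zero.mpr hm
  rw [← Finset.sum_div, ← Finset.sum_div, ← add_div, div_eq_one_iff_eq hm',
    ← Nat.cast_sum, ← Nat.cast_sum, ← Nat.cast_add, Nat.cast_inj]
  rcases p with j | j'
  · rw [Fintype.sum_sum_type, Fintype.sum_sum_type]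
    simp only [w2]
    have h1 : (∑ q : Fin k, if q < j then β j q else 0)
        = ∑ q ∈ univ.filter (fun q => q < j), β j q := (Finset.sum_filter _ _).symm
    have h2 : (∑ p : Fin k, if j < p then β p j else 0)
        = ∑ p ∈ univ.filter (fun p => j < p), β p j := (Finset.sum_filter _ _).symm
    rw [h1, h2]
    have := hdeg j
    simp only [Finset.sum_const_zero]
    omega
  · rw [Fintype.sum_sum_type, Fintype.sum_sum_type]
    simp only [w2]
    have h1 : (∑ q : Fin k', if q < j' then β' j' q else 0)
        = ∑ q ∈ univ.filter (fun q => q < j'), β' j' q := (Finset.sum_filter _ _).symm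
    have h2 : (∑ p : Fin k', if j' < p then β' p j' else 0)
        = ∑ p ∈ univ.filter (fun p => j' < p), β' p j' := (Finset.sum_filter _ _).symm
    rw [h1, h2]
    have := hdeg' j'
    simp only [Finset.sum_const_zero]
    omega

end Aux2

section Aux3

open Finset in
lemma prod_f2_eq {m k k' : ℕ} {H0 t t' : ℝ} {x : ℝ → ENNReal}
    {β : Fin k → Fin k → ℕ} {β' : Fin k' → Fin k' → ℕ} {γ : Fin k → Fin k' → ℕ}
    (hm : m ≠ 0) (hr : 2*H0 - 2 < 0)
    (hrowcol : ∀ p : Fin k ⊕ Fin k',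
      (∑ q, ((w2 β β' γ (p, q) : ℝ) / m)) + (∑ q, ((w2 β β' γ (q, p) : ℝ) / m)) = 1)
    (z : Fin k ⊕ Fin k' → ℝ) :
    ∏ e : (Fin k ⊕ Fin k') × (Fin k ⊕ Fin k'),
        f2 m H0 t t' x e z ^ ((w2 β β' γ e : ℝ) / m)
      = (∏ j, x (t - z (.inl j))) * (∏ j', x (t' - z (.inr j'))) *
        ENNReal.ofReal
          ((∏ j : Fin k, ∏ q ∈ univ.filter (fun q => q < j),
              |z (.inl j) - z (.inl q)| ^ ((β j q : ℝ) * (2*H0 - 2)))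
            * (∏ j' : Fin k', ∏ q' ∈ univ.filter (fun q' => q' < j'),
                |z (.inr j') - z (.inr q')| ^ ((β' j' q' : ℝ) * (2*H0 - 2)))
            * (∏ j : Fin k, ∏ j' : Fin k',
                |z (.inl j) - z (.inr j')| ^ ((γ j j' : ℝ) * (2*H0 - 2)))) := by
  classical
  set r := 2*H0 - 2 with hrdef
  set θ : (Fin k ⊕ Fin k') × (Fin k ⊕ Fin k') → ℝ := fun e => (w2 β β' γ e : ℝ) / m with hθdef
  have hθ : ∀ e, 0 ≤ θ e := fun e => by positivity
  set A : (Fin k ⊕ Fin k') → ENNReal := fun p => x (tt2 t t' p - z p) with hA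
  set B : (Fin k ⊕ Fin k') → (Fin k ⊕ Fin k') → ENNReal :=
    fun p q => ENNReal.ofReal (|z p - z q| ^ ((m : ℝ) * r)) with hB
  have hmul : ∀ (a b c : ENNReal) e, (a * b * c) ^ θ e = a ^ θ e * b ^ θ e * c ^ θ e := by
    intro a b c e
    rw [ENNReal.mul_rpow_of_nonneg _ _ (hθ e), ENNReal.mul_rpow_of_nonneg _ _ (hθ e)]
  have step1 : ∏ e : (Fin k ⊕ Fin k') × (Fin k ⊕ Fin k'),
      f2 m H0 t t' x e z ^ θ e
      = ((∏ p, ∏ q, A p ^ θ (p, q)) * (∏ p, ∏ q, A q ^ θ (p, q)))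
        * (∏ p, ∏ q, B p q ^ θ (p, q)) := by
    rw [Fintype.prod_prod_type]
    simp_rw [f2, hmul, Finset.prod_mul_distrib]
    rfl
  rw [step1]
  have stepA : (∏ p, ∏ q, A p ^ θ (p, q)) * (∏ p, ∏ q, A q ^ θ (p, q)) = ∏ p, A p := by
    have h1 : ∀ p, ∏ q, A p ^ θ (p, q) = A p ^ (∑ q, θ (p, q)) :=
      fun p => prod_rpow_sum _ _ _ (fun q _ => hθ _)
    have h2 : (∏ p, ∏ q, A q ^ θ (p, q)) = ∏ q, A q ^ (∑ p, θ (p, q)) := by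
      rw [Finset.prod_comm]
      exact Finset.prod_congr rfl fun q _ => prod_rpow_sum _ _ _ (fun p _ => hθ _)
    simp_rw [h1, h2, ← Finset.prod_mul_distrib]
    refine Finset.prod_congr rfl fun p _ => ?_
    rw [← ENNReal.rpow_add_of_nonneg _ _ (Finset.sum_nonneg fun q _ => hθ _)
        (Finset.sum_nonneg fun q _ => hθ _), hrowcol p, ENNReal.rpow_one]
  rw [stepA]
  have stepB : (∏ p, ∏ q, B p q ^ θ (p, q))
      = ENNReal.ofReal (∏ p, ∏ q, |z p - z q| ^ ((w2 β β' γ (p, q) : ℝ) * r)) := by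
    have hB1 : ∀ p q, B p q ^ θ (p, q)
        = ENNReal.ofReal (|z p - z q| ^ ((w2 β β' γ (p, q) : ℝ) * r)) :=
      fun p q => (ofReal_abs_rpow_factor hr hm _).symm
    simp_rw [hB1]
    have hinner : ∀ p : Fin k ⊕ Fin k',
        (∏ q, ENNReal.ofReal (|z p - z q| ^ ((w2 β β' γ (p, q) : ℝ) * r)))
          = ENNReal.ofReal (∏ q, |z p - z q| ^ ((w2 β β' γ (p, q) : ℝ) * r)) :=
      fun p => (ENNReal.ofReal_prod_of_nonneg fun q _ => Real.rpow_nonneg (abs_nonneg _) _).symm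
    simp_rw [hinner]
    exact (ENNReal.ofReal_prod_of_nonneg fun p _ =>
      Finset.prod_nonneg fun q _ => Real.rpow_nonneg (abs_nonneg _) _).symm
  rw [stepB]
  have hAsplit : ∏ p, A p = (∏ j, x (t - z (.inl j))) * (∏ j', x (t' - z (.inr j'))) := by
    rw [Fintype.prod_sum_type]; rfl
  rw [hAsplit]
  congr 1
  -- real product identity
  rw [Fintype.prod_sum_type]
  have hblock1 : (∏ j : Fin k, ∏ q : Fin k ⊕ Fin k',
      |z (.inl j) - z q| ^ ((w2 β β' γ (.inl j, q) : ℝ) * r))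
      = (∏ j : Fin k, ∏ q ∈ univ.filter (fun q => q < j),
          |z (.inl j) - z (.inl q)| ^ ((β j q : ℝ) * r))
        * (∏ j : Fin k, ∏ j' : Fin k',
          |z (.inl j) - z (.inr j')| ^ ((γ j j' : ℝ) * r)) := by
    rw [← Finset.prod_mul_distrib]
    refine Finset.prod_congr rfl fun j _ => ?_
    rw [Fintype.prod_sum_type]
    congr 1
    · rw [Finset.prod_filter]
      refine Finset.prod_congr rfl fun q _ => ?_
      by_cases hq : q < j
      · simp [w2, hq]
      · simp [w2, hq]
  have hblock2 : (∏ j' : Fin k', ∏ q : Fin k ⊕ Fin k',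
      |z (.inr j') - z q| ^ ((w2 β β' γ (.inr j', q) : ℝ) * r))
      = ∏ j' : Fin k', ∏ q' ∈ univ.filter (fun q' => q' < j'),
          |z (.inr j') - z (.inr q')| ^ ((β' j' q' : ℝ) * r) := by
    refine Finset.prod_congr rfl fun j' _ => ?_
    rw [Fintype.prod_sum_type]
    have : (∏ q : Fin k, |z (.inr j') - z (.inl q)| ^ ((w2 β β' γ (.inr j', .inl q) : ℝ) * r))
        = 1 := by
      refine Finset.prod_eq_one fun q _ => ?_
      simp [w2]
    rw [this, one_mul, Finset.prod_filter]
    refine Finset.prod_congr rfl fun q' _ => ?_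
    by_cases hq : q' < j'
    · simp [w2, hq]
    · simp [w2, hq]
  rw [hblock1, hblock2, mul_right_comm]

end Aux3

section Aux4

open Function in
lemma lmarg_eval {m k k' : ℕ} {H0 t t' : ℝ} {x : ℝ → ENNReal} (hx : Measurable x)
    (p q : Fin k ⊕ Fin k') (hpq : p ≠ q) (x₀ : Fin k ⊕ Fin k' → ℝ) :
    (∫⋯∫⁻_({p, q} : Finset (Fin k ⊕ Fin k')), f2 m H0 t t' x (p, q)
        ∂(fun i => (volume : Measure ℝ).restrict (Set.Iic (tt2 t t' i)))) x₀
      = pairIntegral m H0 x (tt2 t t' p) (tt2 t t' q) := by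
  classical
  have hf := f2_meas (m := m) (H0 := H0) (t := t) (t' := t') hx (p, q)
  have hq : p ∉ ({q} : Finset (Fin k ⊕ Fin k')) := by simp [hpq]
  rw [show ({p, q} : Finset (Fin k ⊕ Fin k')) = insert p {q} from rfl,
    lmarginal_insert _ hf hq x₀]
  simp_rw [lmarginal_singleton]
  have key : ∀ a b : ℝ, f2 m H0 t t' x (p, q) (update (update x₀ p a) q b)
      = x (tt2 t t' p - a) * x (tt2 t t' q - b)
        * ENNReal.ofReal (|a - b| ^ ((m : ℝ) * (2*H0 - 2))) := by
    intro a b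
    have h1 : update (update x₀ p a) q b p = a := by
      rw [Function.update_of_ne hpq, Function.update_self]
    have h2 : update (update x₀ p a) q b q = b := Function.update_self _ _ _
    simp only [f2, h1, h2]
  simp_rw [key]
  rfl

end Aux4

set_option maxHeartbeats 1000000


/-- Covariance decay of graph-entangled integrals (Lemma 4.1 of the paper): under the
decay assumption `A(u,v) ≤ C` and `A(u,v) ≤ C|u−v|^(m(2H0−2))` for `u ≠ v`, the
two-graph integral is bounded by `C^((b+b'+c)/m) · min(1,|t−t'|^(c(2H0−2)))`
(read as `C^((b+b'+c)/m)` when `t = t'`). -/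
theorem two_graph_covariance_decay (m k k' : ℕ) (hm : 1 ≤ m) (hk : 1 ≤ k) (hk' : 1 ≤ k')
    (H0 : ℝ) (hH0 : 1/2 < H0) (hH0' : H0 < 1) (t t' : ℝ)
    (x : ℝ → ENNReal) (hx : Measurable x)
    (β : Fin k → Fin k → ℕ) (β' : Fin k' → Fin k' → ℕ) (γ : Fin k → Fin k' → ℕ)
    (hdeg : ∀ j : Fin k,
      (∑ q ∈ univ.filter (fun q => q < j), β j q)
        + (∑ p ∈ univ.filter (fun p => j < p), β p j)
        + (∑ j' : Fin k', γ j j') = m)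
    (hdeg' : ∀ j' : Fin k',
      (∑ q' ∈ univ.filter (fun q' => q' < j'), β' j' q')
        + (∑ p' ∈ univ.filter (fun p' => j' < p'), β' p' j')
        + (∑ j : Fin k, γ j j') = m)
    (C : ℝ) (hC : 1 ≤ C)
    (hA1 : ∀ u v : ℝ, pairIntegral m H0 x u v ≤ ENNReal.ofReal C)
    (hA2 : ∀ u v : ℝ, u ≠ v →
      pairIntegral m H0 x u v ≤ ENNReal.ofReal (C * |u - v| ^ ((m : ℝ) * (2*H0 - 2)))) :
    (∫⁻ s in Set.univ.pi (fun _ : Fin k => Set.Iic t),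
      ∫⁻ s' in Set.univ.pi (fun _ : Fin k' => Set.Iic t'),
        (∏ j, x (t - s j)) * (∏ j', x (t' - s' j')) *
        ENNReal.ofReal
          ((∏ j : Fin k, ∏ q ∈ univ.filter (fun q => q < j),
              |s j - s q| ^ ((β j q : ℝ) * (2*H0 - 2)))
            * (∏ j' : Fin k', ∏ q' ∈ univ.filter (fun q' => q' < j'),
                |s' j' - s' q'| ^ ((β' j' q' : ℝ) * (2*H0 - 2)))
            * (∏ j : Fin k, ∏ j' : Fin k',
                |s j - s' j'| ^ ((γ j j' : ℝ) * (2*H0 - 2)))))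
      ≤ ENNReal.ofReal C
          ^ ((((∑ j : Fin k, ∑ q ∈ univ.filter (fun q => q < j), β j q)
              + (∑ j' : Fin k', ∑ q' ∈ univ.filter (fun q' => q' < j'), β' j' q')
              + (∑ j : Fin k, ∑ j' : Fin k', γ j j') : ℕ) : ℝ) / m)
        * (if t = t' then 1
            else min 1 (ENNReal.ofReal
              (|t - t'| ^ (((∑ j : Fin k, ∑ j' : Fin k', γ j j' : ℕ) : ℝ) * (2*H0 - 2))))) := by
  classical
  have hm0 : m ≠ 0 := by omega
  have hmR : (m : ℝ) ≠ 0 := Nat.cast_ne_zero.mpr hm0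
  have hr : 2*H0 - 2 < 0 := by linarith
  set θ : (Fin k ⊕ Fin k') × (Fin k ⊕ Fin k') → ℝ :=
    fun e => (w2 β β' γ e : ℝ) / m with hθdef
  have hθ0 : ∀ e, 0 ≤ θ e := fun e => by positivity
  set μ : (Fin k ⊕ Fin k') → Measure ℝ :=
    fun i => (volume : Measure ℝ).restrict (Set.Iic (tt2 t t' i)) with hμdef
  have hrowcol := rowcol hm0 hdeg hdeg'
  set x₀ : Fin k ⊕ Fin k' → ℝ := fun _ => 0 with hx₀
  set G : (Fin k ⊕ Fin k' → ℝ) → ENNReal :=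
    fun z => ∏ e : (Fin k ⊕ Fin k') × (Fin k ⊕ Fin k'), f2 m H0 t t' x e z ^ θ e with hGdef
  have hGmeas : Measurable G :=
    Finset.measurable_prod _ fun e _ => measurable_rpow_const' (f2_meas hx e) _
  set E := MeasurableEquiv.sumPiEquivProdPi (fun _ : Fin k ⊕ Fin k' => ℝ) with hEdef
  have hpt : ∀ s : Fin k → ℝ, ∀ s' : Fin k' → ℝ,
      (∏ j, x (t - s j)) * (∏ j', x (t' - s' j')) *
        ENNReal.ofReal
          ((∏ j : Fin k, ∏ q ∈ univ.filter (fun q => q < j),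
              |s j - s q| ^ ((β j q : ℝ) * (2*H0 - 2)))
            * (∏ j' : Fin k', ∏ q' ∈ univ.filter (fun q' => q' < j'),
                |s' j' - s' q'| ^ ((β' j' q' : ℝ) * (2*H0 - 2)))
            * (∏ j : Fin k, ∏ j' : Fin k',
                |s j - s' j'| ^ ((γ j j' : ℝ) * (2*H0 - 2))))
        = G (E.symm (s, s')) := by
    intro s s'
    simp only [hGdef, hθdef]
    rw [prod_f2_eq hm0 hr hrowcol]
    rfl
  have hmeas2 : Measurable fun zz : (Fin k → ℝ) × (Fin k' → ℝ) => G (E.symm zz) :=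
    hGmeas.comp E.symm.measurable
  have hnu : (volume : Measure (Fin k → ℝ)).restrict (Set.univ.pi fun _ => Set.Iic t)
      = Measure.pi (fun i : Fin k => μ (Sum.inl i)) := by
    rw [MeasureTheory.volume_pi, restrict_univ_pi _ _ (fun _ => measurableSet_Iic)]
    rfl
  have hnu' : (volume : Measure (Fin k' → ℝ)).restrict (Set.univ.pi fun _ => Set.Iic t')
      = Measure.pi (fun i : Fin k' => μ (Sum.inr i)) := by
    rw [MeasureTheory.volume_pi, restrict_univ_pi _ _ (fun _ => measurableSet_Iic)]
    rfl
  have key : (∫⁻ s in Set.univ.pi (fun _ : Fin k => Set.Iic t),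
      ∫⁻ s' in Set.univ.pi (fun _ : Fin k' => Set.Iic t'),
        (∏ j, x (t - s j)) * (∏ j', x (t' - s' j')) *
        ENNReal.ofReal
          ((∏ j : Fin k, ∏ q ∈ univ.filter (fun q => q < j),
              |s j - s q| ^ ((β j q : ℝ) * (2*H0 - 2)))
            * (∏ j' : Fin k', ∏ q' ∈ univ.filter (fun q' => q' < j'),
                |s' j' - s' q'| ^ ((β' j' q' : ℝ) * (2*H0 - 2)))
            * (∏ j : Fin k, ∏ j' : Fin k',
                |s j - s' j'| ^ ((γ j j' : ℝ) * (2*H0 - 2)))))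
      = ∫⁻ z, G z ∂(Measure.pi μ) := by
    rw [hnu, hnu']
    simp_rw [hpt]
    rw [← MeasureTheory.lintegral_prod _ hmeas2.aemeasurable]
    exact (measurePreserving_sumPiEquivProdPi_symm μ).lintegral_comp hGmeas
  rw [key]
  have hfin : ∫⁻ z, G z ∂(Measure.pi μ)
      ≤ ∏ e : (Fin k ⊕ Fin k') × (Fin k ⊕ Fin k'),
          (pairIntegral m H0 x (tt2 t t' e.1) (tt2 t t' e.2)) ^ θ e := by
    rw [lintegral_eq_lmarginal_univ (μ := μ) x₀, hGdef]
    have hdegθ : ∀ i ∈ (Finset.univ : Finset (Fin k ⊕ Fin k')), ∑ e ∈ Finset.univ,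
        (if i ∈ ({e.1, e.2} : Finset (Fin k ⊕ Fin k')) then θ e else 0) = 1 := by
      intro i _
      rw [sum_pair_indicator θ i]
      have hdiag : θ (i, i) = 0 := by simp [hθdef, w2_diag]
      rw [hdiag, sub_zero]
      exact hrowcol i
    refine le_trans (finner_holder μ Finset.univ (fun e => {e.1, e.2}) θ
      (f2 m H0 t t' x) (f2_meas hx) f2_dep hθ0 Finset.univ hdegθ x₀) ?_
    refine le_of_eq (Finset.prod_congr rfl fun e _ => ?_)
    obtain ⟨p, q⟩ := e
    rcases eq_or_ne p q with hpq | hpq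
    · subst hpq
      have h0 : θ (p, p) = 0 := by simp [hθdef, w2_diag]
      rw [h0, ENNReal.rpow_zero, ENNReal.rpow_zero]
    · rw [Finset.univ_inter, lmarg_eval hx p q hpq x₀]
  refine le_trans hfin ?_
  set κ := ENNReal.ofReal C with hκdef
  set Nb := ∑ j : Fin k, ∑ q ∈ univ.filter (fun q => q < j), β j q with hNb
  set Nb' := ∑ j' : Fin k', ∑ q' ∈ univ.filter (fun q' => q' < j'), β' j' q' with hNb'
  set Nc := ∑ j : Fin k, ∑ j' : Fin k', γ j j' with hNc
  have hS11 : ∑ j : Fin k, ∑ q : Fin k, θ (Sum.inl j, Sum.inl q) = (Nb : ℝ)/m := by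
    simp only [hθdef, w2, hNb]
    simp_rw [← Finset.sum_div]
    congr 1
    push_cast
    simp_rw [Finset.sum_filter]
  have hS22 : ∑ j' : Fin k', ∑ q' : Fin k', θ (Sum.inr j', Sum.inr q') = (Nb' : ℝ)/m := by
    simp only [hθdef, w2, hNb']
    simp_rw [← Finset.sum_div]
    congr 1
    push_cast
    simp_rw [Finset.sum_filter]
  have hS12 : ∑ j : Fin k, ∑ j' : Fin k', θ (Sum.inl j, Sum.inr j') = (Nc : ℝ)/m := by
    simp only [hθdef, w2, hNc]
    simp_rw [← Finset.sum_div]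
    congr 1
    push_cast
    rfl
  have hsplit : (∏ e : (Fin k ⊕ Fin k') × (Fin k ⊕ Fin k'),
        (pairIntegral m H0 x (tt2 t t' e.1) (tt2 t t' e.2)) ^ θ e)
      = ((∏ j : Fin k, ∏ q : Fin k, pairIntegral m H0 x t t ^ θ (Sum.inl j, Sum.inl q))
          * (∏ j : Fin k, ∏ j' : Fin k', pairIntegral m H0 x t t' ^ θ (Sum.inl j, Sum.inr j')))
        * ((∏ j' : Fin k', ∏ j : Fin k, pairIntegral m H0 x t' t ^ θ (Sum.inr j', Sum.inl j))
          * (∏ j' : Fin k', ∏ q' : Fin k', pairIntegral m H0 x t' t' ^ θ (Sum.inr j', Sum.inr q'))) := by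
    rw [Fintype.prod_prod_type, Fintype.prod_sum_type]
    congr 1
    · rw [← Finset.prod_mul_distrib]
      exact Finset.prod_congr rfl fun j _ => Fintype.prod_sum_type _
    · rw [← Finset.prod_mul_distrib]
      exact Finset.prod_congr rfl fun j' _ => Fintype.prod_sum_type _
  have hb11 : (∏ j : Fin k, ∏ q : Fin k, pairIntegral m H0 x t t ^ θ (Sum.inl j, Sum.inl q))
      ≤ κ ^ ((Nb : ℝ)/m) := by
    calc (∏ j : Fin k, ∏ q : Fin k, pairIntegral m H0 x t t ^ θ (Sum.inl j, Sum.inl q))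
        ≤ ∏ j : Fin k, ∏ q : Fin k, κ ^ θ (Sum.inl j, Sum.inl q) :=
          Finset.prod_le_prod' fun j _ => Finset.prod_le_prod' fun q _ =>
            ENNReal.rpow_le_rpow (hA1 _ _) (hθ0 _)
      _ = κ ^ ((Nb : ℝ)/m) := by
          have hin : ∀ j : Fin k, ∏ q : Fin k, κ ^ θ (Sum.inl j, Sum.inl q)
              = κ ^ (∑ q : Fin k, θ (Sum.inl j, Sum.inl q)) :=
            fun j => prod_rpow_sum _ _ _ fun q _ => hθ0 _
          simp_rw [hin]
          rw [prod_rpow_sum _ _ _ (fun j _ => Finset.sum_nonneg fun q _ => hθ0 _), hS11]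
  have hb22 : (∏ j' : Fin k', ∏ q' : Fin k', pairIntegral m H0 x t' t' ^ θ (Sum.inr j', Sum.inr q'))
      ≤ κ ^ ((Nb' : ℝ)/m) := by
    calc (∏ j' : Fin k', ∏ q' : Fin k', pairIntegral m H0 x t' t' ^ θ (Sum.inr j', Sum.inr q'))
        ≤ ∏ j' : Fin k', ∏ q' : Fin k', κ ^ θ (Sum.inr j', Sum.inr q') :=
          Finset.prod_le_prod' fun j' _ => Finset.prod_le_prod' fun q' _ =>
            ENNReal.rpow_le_rpow (hA1 _ _) (hθ0 _)
      _ = κ ^ ((Nb' : ℝ)/m) := by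
          have hin : ∀ j' : Fin k', ∏ q' : Fin k', κ ^ θ (Sum.inr j', Sum.inr q')
              = κ ^ (∑ q' : Fin k', θ (Sum.inr j', Sum.inr q')) :=
            fun j' => prod_rpow_sum _ _ _ fun q' _ => hθ0 _
          simp_rw [hin]
          rw [prod_rpow_sum _ _ _ (fun j' _ => Finset.sum_nonneg fun q' _ => hθ0 _), hS22]
  have hb21 : (∏ j' : Fin k', ∏ j : Fin k, pairIntegral m H0 x t' t ^ θ (Sum.inr j', Sum.inl j))
      = 1 := by
    refine Finset.prod_eq_one fun j' _ => Finset.prod_eq_one fun j _ => ?_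
    have h0 : θ (Sum.inr j', Sum.inl j) = 0 := by simp [hθdef, w2]
    rw [h0, ENNReal.rpow_zero]
  have hb12gen : ∀ b : ENNReal, (∀ j j', pairIntegral m H0 x t t' ^ θ (Sum.inl j, Sum.inr j')
        ≤ b ^ θ (Sum.inl j, Sum.inr j')) →
      (∏ j : Fin k, ∏ j' : Fin k', pairIntegral m H0 x t t' ^ θ (Sum.inl j, Sum.inr j'))
        ≤ b ^ ((Nc : ℝ)/m) := by
    intro b hb
    calc (∏ j : Fin k, ∏ j' : Fin k', pairIntegral m H0 x t t' ^ θ (Sum.inl j, Sum.inr j'))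
        ≤ ∏ j : Fin k, ∏ j' : Fin k', b ^ θ (Sum.inl j, Sum.inr j') :=
          Finset.prod_le_prod' fun j _ => Finset.prod_le_prod' fun j' _ => hb j j'
      _ = b ^ ((Nc : ℝ)/m) := by
          have hin : ∀ j : Fin k, ∏ j' : Fin k', b ^ θ (Sum.inl j, Sum.inr j')
              = b ^ (∑ j' : Fin k', θ (Sum.inl j, Sum.inr j')) :=
            fun j => prod_rpow_sum _ _ _ fun j' _ => hθ0 _
          simp_rw [hin]
          rw [prod_rpow_sum _ _ _ (fun j _ => Finset.sum_nonneg fun j' _ => hθ0 _), hS12]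
  have hb12C : (∏ j : Fin k, ∏ j' : Fin k', pairIntegral m H0 x t t' ^ θ (Sum.inl j, Sum.inr j'))
      ≤ κ ^ ((Nc : ℝ)/m) :=
    hb12gen κ fun j j' => ENNReal.rpow_le_rpow (hA1 _ _) (hθ0 _)
  have htot : κ ^ ((Nb : ℝ)/m) * κ ^ ((Nc : ℝ)/m) * κ ^ ((Nb' : ℝ)/m)
      = κ ^ (((Nb + Nb' + Nc : ℕ) : ℝ)/m) := by
    rw [← ENNReal.rpow_add_of_nonneg _ _ (by positivity) (by positivity),
      ← ENNReal.rpow_add_of_nonneg _ _ (by positivity) (by positivity)]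
    congr 1
    push_cast
    ring
  rw [hsplit, hb21, one_mul]
  by_cases ht : t = t'
  · rw [if_pos ht, mul_one]
    calc (∏ j : Fin k, ∏ q : Fin k, pairIntegral m H0 x t t ^ θ (Sum.inl j, Sum.inl q))
          * (∏ j : Fin k, ∏ j' : Fin k', pairIntegral m H0 x t t' ^ θ (Sum.inl j, Sum.inr j'))
          * (∏ j' : Fin k', ∏ q' : Fin k', pairIntegral m H0 x t' t' ^ θ (Sum.inr j', Sum.inr q'))
        ≤ κ ^ ((Nb : ℝ)/m) * (κ ^ ((Nc : ℝ)/m)) * (κ ^ ((Nb' : ℝ)/m)) :=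
          mul_le_mul' (mul_le_mul' hb11 hb12C) hb22
      _ = κ ^ (((Nb + Nb' + Nc : ℕ) : ℝ)/m) := htot
  · rw [if_neg ht]
    rcases le_total 1 (ENNReal.ofReal (|t - t'| ^ ((Nc : ℝ) * (2*H0 - 2)))) with h1 | h1
    · rw [min_eq_left h1, mul_one]
      calc (∏ j : Fin k, ∏ q : Fin k, pairIntegral m H0 x t t ^ θ (Sum.inl j, Sum.inl q))
            * (∏ j : Fin k, ∏ j' : Fin k', pairIntegral m H0 x t t' ^ θ (Sum.inl j, Sum.inr j'))
            * (∏ j' : Fin k', ∏ q' : Fin k', pairIntegral m H0 x t' t' ^ θ (Sum.inr j', Sum.inr q'))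
          ≤ κ ^ ((Nb : ℝ)/m) * (κ ^ ((Nc : ℝ)/m)) * (κ ^ ((Nb' : ℝ)/m)) :=
            mul_le_mul' (mul_le_mul' hb11 hb12C) hb22
        _ = κ ^ (((Nb + Nb' + Nc : ℕ) : ℝ)/m) := htot
    · rw [min_eq_right h1]
      have hb12D : (∏ j : Fin k, ∏ j' : Fin k', pairIntegral m H0 x t t' ^ θ (Sum.inl j, Sum.inr j'))
          ≤ κ ^ ((Nc : ℝ)/m) * ENNReal.ofReal (|t - t'| ^ ((Nc : ℝ) * (2*H0 - 2))) := by
        refine le_trans (hb12gen (ENNReal.ofReal (C * |t - t'| ^ ((m : ℝ) * (2*H0 - 2))))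
          (fun j j' => ENNReal.rpow_le_rpow (hA2 t t' ht) (hθ0 _))) ?_
        rw [ENNReal.ofReal_mul (by linarith : (0:ℝ) ≤ C),
          ENNReal.mul_rpow_of_nonneg _ _ (by positivity)]
        refine mul_le_mul' le_rfl (le_of_eq ?_)
        exact (ofReal_abs_rpow_factor hr hm0 Nc).symm
      calc (∏ j : Fin k, ∏ q : Fin k, pairIntegral m H0 x t t ^ θ (Sum.inl j, Sum.inl q))
            * (∏ j : Fin k, ∏ j' : Fin k', pairIntegral m H0 x t t' ^ θ (Sum.inl j, Sum.inr j'))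
            * (∏ j' : Fin k', ∏ q' : Fin k', pairIntegral m H0 x t' t' ^ θ (Sum.inr j', Sum.inr q'))
          ≤ κ ^ ((Nb : ℝ)/m)
              * (κ ^ ((Nc : ℝ)/m) * ENNReal.ofReal (|t - t'| ^ ((Nc : ℝ) * (2*H0 - 2))))
              * (κ ^ ((Nb' : ℝ)/m)) :=
            mul_le_mul' (mul_le_mul' hb11 hb12D) hb22
        _ = κ ^ ((Nb : ℝ)/m) * κ ^ ((Nc : ℝ)/m) * κ ^ ((Nb' : ℝ)/m)
              * ENNReal.ofReal (|t - t'| ^ ((Nc : ℝ) * (2*H0 - 2))) := by ring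
        _ = κ ^ (((Nb + Nb' + Nc : ℕ) : ℝ)/m)
              * ENNReal.ofReal (|t - t'| ^ ((Nc : ℝ) * (2*H0 - 2))) := by rw [htot]
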